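/- If s = σ + it is a complex number with σ > 1 and ζ'(s) = 0, then log 2 / (2^σ + 1) ≤ ∑_{p ≥ 3} (log p)/(p^σ - 1), where the sum runs over odd primes p. -/

import Mathlib

open Complex

open scoped LSeries.notation ArithmeticFunction

/-- If `Re s > 1` and `ζ'(s) = 0`, then `log 2/(2^sig+1) ≤ ∑_{p odd prime} (log p)/(p^sig-1)`
where `sig = Re s`. -/
theorem zeta_deriv_zero_ineq (s : ℂ) (hs : 1 < s.re) (hz : deriv riemannZeta s = 0) :
    Real.log 2 / ((2 : ℝ) ^ s.re + 1) ≤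
      ∑' p : {p : Nat.Primes // 3 ≤ (p : ℕ)},
        Real.log (p : ℕ) / (((p : ℕ) : ℝ) ^ s.re - 1) := by
  set sig := s.re with hsig
  -- basic facts about primes
  have hple : ∀ p : Nat.Primes, (2 : ℝ) ≤ (p : ℕ) := fun p => by
    exact_mod_cast p.prop.two_le
  have hppos : ∀ p : Nat.Primes, (0 : ℝ) < (p : ℕ) := fun p =>
    lt_of_lt_of_le two_pos (hple p)
  have hrge : ∀ p : Nat.Primes, (2 : ℝ) ≤ ((p : ℕ) : ℝ) ^ sig := by
    intro p
    calc (2 : ℝ) ≤ ((p : ℕ) : ℝ) := hple p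
    _ = ((p : ℕ) : ℝ) ^ (1 : ℝ) := (Real.rpow_one _).symm
    _ ≤ ((p : ℕ) : ℝ) ^ sig :=
      Real.rpow_le_rpow_of_exponent_le (le_trans one_le_two (hple p)) hs.le
  have hr1 : ∀ p : Nat.Primes, (0 : ℝ) < ((p : ℕ) : ℝ) ^ sig - 1 := fun p => by
    have := hrge p; linarith
  have hr2 : ∀ p : Nat.Primes, ((p : ℕ) : ℝ) ^ sig / 2 ≤ ((p : ℕ) : ℝ) ^ sig - 1 := fun p => by
    have := hrge p; linarith
  -- the real majorant
  set g : Nat.Primes → ℝ := fun p => Real.log (p : ℕ) / (((p : ℕ) : ℝ) ^ sig - 1) with hg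
  have hgnn : ∀ p : Nat.Primes, 0 ≤ g p := fun p =>
    div_nonneg (Real.log_nonneg (le_trans one_le_two (hple p))) (hr1 p).le
  -- summability of g
  have hgsum : Summable g := by
    set ε : ℝ := (sig - 1) / 2 with hε
    have hεpos : 0 < ε := by simp only [hε]; linarith
    have hmaj : Summable fun p : Nat.Primes => 2 / ε * ((p : ℕ) : ℝ) ^ (ε - sig) := by
      refine Summable.mul_left _ ?_
      refine Nat.Primes.summable_rpow.mpr ?_
      simp only [hε]; linarith
    refine hmaj.of_nonneg_of_le hgnn fun p => ?_
    have hlog : Real.log (p : ℕ) ≤ ((p : ℕ) : ℝ) ^ ε / ε :=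
      Real.log_le_rpow_div (Nat.cast_nonneg _) hεpos
    calc g p ≤ (((p : ℕ) : ℝ) ^ ε / ε) / (((p : ℕ) : ℝ) ^ sig / 2) :=
          div_le_div₀ (div_nonneg (Real.rpow_nonneg (Nat.cast_nonneg _) _) hεpos.le)
            hlog (by have := hrge p; linarith) (hr2 p)
      _ = 2 / ε * ((p : ℕ) : ℝ) ^ (ε - sig) := by
          rw [Real.rpow_sub (hppos p)]
          field_simp
  -- the complex series over primes
  set f : Nat.Primes → ℂ := fun p => (Real.log (p : ℕ) : ℂ) / (((p : ℕ) : ℂ) ^ s - 1) with hf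
  -- norms
  have hnorm_ps : ∀ p : Nat.Primes, ‖((p : ℕ) : ℂ) ^ s‖ = ((p : ℕ) : ℝ) ^ sig := fun p =>
    Complex.norm_natCast_cpow_of_pos p.prop.pos s
  have hden_lb : ∀ p : Nat.Primes, ((p : ℕ) : ℝ) ^ sig - 1 ≤ ‖((p : ℕ) : ℂ) ^ s - 1‖ := fun p => by
    calc ((p : ℕ) : ℝ) ^ sig - 1 = ‖((p : ℕ) : ℂ) ^ s‖ - ‖(1 : ℂ)‖ := by
          rw [hnorm_ps p, norm_one]
      _ ≤ ‖((p : ℕ) : ℂ) ^ s - 1‖ := norm_sub_norm_le _ _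
  have hden_pos : ∀ p : Nat.Primes, (0 : ℝ) < ‖((p : ℕ) : ℂ) ^ s - 1‖ := fun p =>
    lt_of_lt_of_le (hr1 p) (hden_lb p)
  have hnorm_f : ∀ p : Nat.Primes, ‖f p‖ ≤ g p := fun p => by
    have h1 : ‖f p‖ = Real.log (p : ℕ) / ‖((p : ℕ) : ℂ) ^ s - 1‖ := by
      simp only [hf, norm_div, Complex.norm_real, Real.norm_eq_abs,
        _root_.abs_of_nonneg (Real.log_nonneg (le_trans one_le_two (hple p)))]
    rw [h1]
    exact div_le_div_of_nonneg_left (Real.log_nonneg (le_trans one_le_two (hple p)))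
      (hr1 p) (hden_lb p)
  have hfnormsum : Summable fun p : Nat.Primes => ‖f p‖ :=
    hgsum.of_nonneg_of_le (fun p => norm_nonneg _) hnorm_f
  have hfsum : Summable f := hfnormsum.of_norm
  -- the L-series of Λ equals the sum of f over primes
  have hΛsum : LSeriesSummable ↗Λ s := ArithmeticFunction.LSeriesSummable_vonMangoldt hs
  have hxnorm : ∀ p : Nat.Primes, ‖((p : ℕ) : ℂ) ^ (-s)‖ < 1 := fun p => by
    rw [Complex.norm_natCast_cpow_of_pos p.prop.pos, neg_re, ← hsig]
    rw [Real.rpow_neg (hppos p).le]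
    rw [inv_lt_one₀ (by have := hrge p; linarith)]
    have := hrge p; linarith
  have hterm : ∀ (p : Nat.Primes) (k : ℕ),
      LSeries.term ↗Λ s ((p : ℕ) ^ (k + 1)) =
        (Real.log (p : ℕ) : ℂ) * (((p : ℕ) : ℂ) ^ (-s)) ^ (k + 1) := by
    intro p k
    rw [LSeries.term_of_ne_zero (pow_ne_zero _ p.prop.pos.ne')]
    rw [ArithmeticFunction.vonMangoldt_apply_pow (Nat.succ_ne_zero k),
      ArithmeticFunction.vonMangoldt_apply_prime p.prop]
    rw [Nat.cast_pow]
    have harg : (((p : ℕ) : ℂ)).arg = 0 := Complex.natCast_arg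
    have h1 : ((((p : ℕ) : ℂ)) ^ (k + 1 : ℕ)) ^ s = (((p : ℕ) : ℂ)) ^ (((k + 1 : ℕ) : ℂ) * s) := by
      rw [Complex.cpow_nat_mul' (by rw [harg]; simpa using Real.pi_pos)
        (by rw [harg]; simpa using Real.pi_pos.le)]
    rw [h1, div_eq_mul_inv, ← Complex.cpow_neg]
    congr 1
    rw [show -(((k + 1 : ℕ) : ℂ) * s) = ((k + 1 : ℕ) : ℂ) * (-s) by ring,
      Complex.cpow_nat_mul]
  have hinner : ∀ p : Nat.Primes,
      (∑' k : ℕ, LSeries.term ↗Λ s ((p : ℕ) ^ (k + 1))) = f p := by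
    intro p
    set x : ℂ := ((p : ℕ) : ℂ) ^ (-s) with hx
    have hx1 : 1 - x ≠ 0 := by
      intro h
      rw [sub_eq_zero] at h
      have h2 := hxnorm p
      rw [← hx, ← h, norm_one] at h2
      exact lt_irrefl 1 h2
    have hps : ((p : ℕ) : ℂ) ^ s ≠ 0 := by
      refine norm_pos_iff.mp ?_
      rw [hnorm_ps p]
      have := hrge p; linarith
    have hxinv : x = (((p : ℕ) : ℂ) ^ s)⁻¹ := by rw [hx, Complex.cpow_neg]
    calc (∑' k : ℕ, LSeries.term ↗Λ s ((p : ℕ) ^ (k + 1)))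
        = ∑' k : ℕ, (Real.log (p : ℕ) : ℂ) * x ^ (k + 1) := tsum_congr (hterm p)
      _ = (Real.log (p : ℕ) : ℂ) * ∑' k : ℕ, x ^ (k + 1) := tsum_mul_left
      _ = (Real.log (p : ℕ) : ℂ) * (x * (1 - x)⁻¹) := by
          congr 1
          calc (∑' k : ℕ, x ^ (k + 1)) = ∑' k : ℕ, x * x ^ k := by
                refine tsum_congr fun k => ?_; rw [pow_succ']
            _ = x * ∑' k : ℕ, x ^ k := tsum_mul_left
            _ = x * (1 - x)⁻¹ := by rw [tsum_geometric_of_norm_lt_one (hxnorm p)]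
      _ = f p := by
          simp only [hf, hxinv]
          field_simp
          try ring
  have hLeq : LSeries ↗Λ s = ∑' p : Nat.Primes, f p := by
    rw [LSeries]
    rw [tsum_eq_tsum_primes_of_support_subset_prime_powers hΛsum ?_]
    · exact tsum_congr hinner
    · intro n hn
      simp only [Function.mem_support] at hn
      rcases eq_or_ne n 0 with rfl | hn0
      · simp [LSeries.term_zero] at hn
      · rw [LSeries.term_of_ne_zero hn0] at hn
        have : Λ n ≠ 0 := fun h => hn (by simp [h])
        exact ArithmeticFunction.vonMangoldt_ne_zero_iff.mp this
  have hL0 : LSeries ↗Λ s = 0 := by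
    rw [ArithmeticFunction.LSeries_vonMangoldt_eq_deriv_riemannZeta_div hs, hz]
    simp
  have htot : (∑' p : Nat.Primes, f p) = 0 := by rw [← hLeq, hL0]
  -- split off p = 2
  set P2 : Nat.Primes := ⟨2, Nat.prime_two⟩ with hP2
  set S : Set Nat.Primes := {p : Nat.Primes | 3 ≤ (p : ℕ)} with hS
  have hcompl : Sᶜ = {P2} := by
    ext p
    simp only [Set.mem_compl_iff, hS, Set.mem_setOf_eq, not_le, Set.mem_singleton_iff]
    constructor
    · intro h
      have h2 : 2 ≤ (p : ℕ) := p.prop.two_le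
      have : (p : ℕ) = 2 := by omega
      exact Subtype.ext this
    · rintro rfl; norm_num [hP2]
  have hsplit : (∑' p : S, f p) + f P2 = ∑' p : Nat.Primes, f p := by
    have := Summable.tsum_subtype_add_tsum_subtype_compl hfsum S
    rwa [hcompl, tsum_singleton] at this
  have hkey : f P2 = -∑' p : S, f p := by
    have : (∑' p : S, f p) + f P2 = 0 := by rw [hsplit, htot]
    linear_combination this
  -- now take norms
  have hnormP2 : ‖f P2‖ = Real.log 2 / ‖((2 : ℕ) : ℂ) ^ s - 1‖ := by
    have hfp : f P2 = (Real.log 2 : ℂ) / (((2 : ℕ) : ℂ) ^ s - 1) := by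
      simp only [hf, hP2]
      norm_num
    rw [hfp, norm_div, Complex.norm_real, Real.norm_eq_abs,
      _root_.abs_of_nonneg (Real.log_nonneg one_le_two)]
  have hub : ‖((2 : ℕ) : ℂ) ^ s - 1‖ ≤ (2 : ℝ) ^ sig + 1 := by
    calc ‖((2 : ℕ) : ℂ) ^ s - 1‖ ≤ ‖((2 : ℕ) : ℂ) ^ s‖ + ‖(1 : ℂ)‖ := norm_sub_le _ _
      _ = (2 : ℝ) ^ sig + 1 := by
        rw [Complex.norm_natCast_cpow_of_pos two_pos, norm_one]
        norm_num
        rfl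
  have hlb : (0 : ℝ) < ‖((2 : ℕ) : ℂ) ^ s - 1‖ := by
    have := hden_pos P2
    simpa [hP2] using this
  -- conclude
  have hfinal : Real.log 2 / ((2 : ℝ) ^ sig + 1) ≤ ∑' p : S, g p := by
    calc Real.log 2 / ((2 : ℝ) ^ sig + 1)
        ≤ Real.log 2 / ‖((2 : ℕ) : ℂ) ^ s - 1‖ :=
          div_le_div_of_nonneg_left (Real.log_nonneg one_le_two) hlb hub
      _ = ‖f P2‖ := hnormP2.symm
      _ = ‖∑' p : S, f p‖ := by rw [hkey, norm_neg]
      _ ≤ ∑' p : S, ‖f p‖ := norm_tsum_le_tsum_norm (hfnormsum.subtype S)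
      _ ≤ ∑' p : S, g p :=
          Summable.tsum_le_tsum (fun p => hnorm_f p) (hfnormsum.subtype S) (hgsum.subtype S)
  exact hfinal
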